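/- Let H be a Hopf algebra with invertible antipode, δ a character and σ a group-like element. If ^σℂ_δ is a right-left stable anti-Yetter-Drinfeld module over H, then ^{S⁻¹(σ)}ℂ_δ is a right-left stable anti-Yetter-Drinfeld module over the co-opposite Hopf algebra H^cop. -/

import Mathlib

/-!
Statement 3: Let `H` be a Hopf algebra with invertible antipode, `δ` a
character and `σ` a group-like element.  If `^σℂ_δ` is a right-left stable
anti-Yetter-Drinfeld module over `H`, then `^{S⁻¹(σ)}ℂ_δ` is a right-left
stable anti-Yetter-Drinfeld module over the co-opposite Hopf algebra `H^cop`
(which has the opposite coproduct `Δ^op = τ ∘ Δ` and antipode `S⁻¹`).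
-/

open TensorProduct Coalgebra

noncomputable section

variable {H : Type*} [Ring H] [HopfAlgebra ℂ H]

/-- A group-like element of a Hopf algebra: `Δ(σ) = σ ⊗ σ` and `ε(σ) = 1`. -/
def IsGroupLike (σ : H) : Prop :=
  Coalgebra.counit (R := ℂ) σ = 1 ∧ Coalgebra.comul (R := ℂ) σ = σ ⊗ₜ[ℂ] σ

/-- Iterated comultiplication `h ↦ h₍₁₎ ⊗ (h₍₂₎ ⊗ h₍₃₎)`. -/
def comul₂ : H →ₗ[ℂ] H ⊗[ℂ] (H ⊗[ℂ] H) :=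
  LinearMap.lTensor H (Coalgebra.comul (R := ℂ)) ∘ₗ Coalgebra.comul

/-- The linear map `h ↦ Σ δ(h₍₂₎) • (S(h₍₃₎) * σ * h₍₁₎)`, i.e. the right-hand
side of the anti-Yetter-Drinfeld condition for `^σℂ_δ` over `H`
(identifying `H ⊗ ℂ ≅ H`). -/
def aydMap (δ : H →ₐ[ℂ] ℂ) (σ : H) : H →ₗ[ℂ] H :=
  LinearMap.mul' ℂ H
    ∘ₗ TensorProduct.map (LinearMap.mulRight ℂ σ) LinearMap.id
    ∘ₗ (TensorProduct.comm ℂ H H).toLinearMap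
    ∘ₗ LinearMap.lTensor H
        ((TensorProduct.lid ℂ H).toLinearMap
          ∘ₗ TensorProduct.map δ.toLinearMap (HopfAlgebra.antipode (R := ℂ)))
    ∘ₗ comul₂

/-- `^σℂ_δ` is a stable right-left anti-Yetter-Drinfeld module over `H`. -/
def IsStableAntiYetterDrinfeld (δ : H →ₐ[ℂ] ℂ) (σ : H) : Prop :=
  δ σ = 1 ∧ ∀ h : H, aydMap δ σ h = δ h • σ

/-- The right-hand side of the anti-Yetter-Drinfeld condition for `^σ'ℂ_δ`
over the co-opposite Hopf algebra `H^cop` (whose Sweedler components are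
`h₍₁₎^cop ⊗ h₍₂₎^cop ⊗ h₍₃₎^cop = h₍₃₎ ⊗ h₍₂₎ ⊗ h₍₁₎` and whose antipode is
`S⁻¹`):  `h ↦ Σ δ(h₍₂₎) • (S⁻¹(h₍₁₎) * σ' * h₍₃₎)`. -/
def aydMapCop (δ : H →ₐ[ℂ] ℂ) (Sinv : H →ₗ[ℂ] H) (σ' : H) : H →ₗ[ℂ] H :=
  LinearMap.mul' ℂ H
    ∘ₗ TensorProduct.map (LinearMap.mulRight ℂ σ' ∘ₗ Sinv)
        ((TensorProduct.lid ℂ H).toLinearMap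
          ∘ₗ TensorProduct.map δ.toLinearMap LinearMap.id)
    ∘ₗ comul₂

/-- `^σ'ℂ_δ` is a stable right-left anti-Yetter-Drinfeld module over the
co-opposite Hopf algebra `H^cop`, whose antipode is the inverse `Sinv` of the
antipode of `H`. -/
def IsStableAntiYetterDrinfeldCop (δ : H →ₐ[ℂ] ℂ) (Sinv : H →ₗ[ℂ] H) (σ' : H) : Prop :=
  δ σ' = 1 ∧ ∀ h : H, aydMapCop δ Sinv σ' h = δ h • σ'

def mulRepr {ι κ : Type*} {x y : H} (t : Coalgebra.Repr ℂ x ι) (u : Coalgebra.Repr ℂ y κ) :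
    Coalgebra.Repr ℂ (x * y) (ι × κ) where
  index := t.index ×ˢ u.index
  left p := t.left p.1 * u.left p.2
  right p := t.right p.1 * u.right p.2
  eq := by
    rw [Finset.sum_product]
    rw [Bialgebra.comul_mul, ← t.eq, ← u.eq, Finset.sum_mul_sum]
    simp [Algebra.TensorProduct.tmul_mul_tmul]

lemma sum_counit_smul_right {ι : Type*} {a : H} (r : Coalgebra.Repr ℂ a ι) :
    ∑ i ∈ r.index, Coalgebra.counit (R := ℂ) (r.left i) • r.right i = a := by
  have h := congrArg (TensorProduct.lid ℂ H) (Coalgebra.sum_counit_tmul_eq r)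
  simp only [map_sum, TensorProduct.lid_tmul, one_smul] at h
  exact h

lemma sum_counit_smul_left {ι : Type*} {a : H} (r : Coalgebra.Repr ℂ a ι) :
    ∑ i ∈ r.index, Coalgebra.counit (R := ℂ) (r.right i) • r.left i = a := by
  have h := congrArg (TensorProduct.rid ℂ H) (Coalgebra.sum_tmul_counit_eq r)
  simp only [map_sum, TensorProduct.rid_tmul, one_smul] at h
  exact h

lemma sweedler_W {ι κ : Type*} {a : H} (r : Coalgebra.Repr ℂ a ι)
    (r2 : ∀ i : ι, Coalgebra.Repr ℂ (r.right i) κ) :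
    ∑ i ∈ r.index, ∑ k ∈ (r2 i).index,
      (HopfAlgebra.antipode (R := ℂ) (r.left i) * (r2 i).left k) ⊗ₜ[ℂ] (r2 i).right k
      = (1 : H) ⊗ₜ[ℂ] a := by
  classical
  have h3 := Coalgebra.sum_tmul_tmul_eq r (fun i => ℛ ℂ (r.left i)) r2
  set T : H ⊗[ℂ] (H ⊗[ℂ] H) →ₗ[ℂ] H ⊗[ℂ] H :=
    LinearMap.rTensor H
      (LinearMap.mul' ℂ H ∘ₗ TensorProduct.map (HopfAlgebra.antipode (R := ℂ)) LinearMap.id)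
      ∘ₗ (TensorProduct.assoc ℂ H H H).symm.toLinearMap with hT
  have hTapp : ∀ x y z : H, T (x ⊗ₜ[ℂ] (y ⊗ₜ[ℂ] z)) =
      (HopfAlgebra.antipode (R := ℂ) x * y) ⊗ₜ[ℂ] z := by
    intro x y z
    simp [hT, TensorProduct.assoc_symm_tmul, LinearMap.mul'_apply]
  apply_fun T at h3
  rw [map_sum, map_sum] at h3
  simp only [map_sum, hTapp] at h3
  rw [← h3]
  calc ∑ i ∈ r.index, ∑ j ∈ (ℛ ℂ (r.left i)).index,
        (HopfAlgebra.antipode (R := ℂ) ((ℛ ℂ (r.left i)).left j) * (ℛ ℂ (r.left i)).right j)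
          ⊗ₜ[ℂ] r.right i
      = ∑ i ∈ r.index,
          (Coalgebra.counit (R := ℂ) (r.left i) • (1 : H)) ⊗ₜ[ℂ] r.right i := by
        refine Finset.sum_congr rfl fun i _ => ?_
        rw [← TensorProduct.sum_tmul, HopfAlgebra.sum_antipode_mul_eq_smul]
    _ = (1 : H) ⊗ₜ[ℂ] ∑ i ∈ r.index, Coalgebra.counit (R := ℂ) (r.left i) • r.right i := by
        rw [TensorProduct.tmul_sum]
        refine Finset.sum_congr rfl fun i _ => ?_
        rw [TensorProduct.smul_tmul, TensorProduct.tmul_smul]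
    _ = (1 : H) ⊗ₜ[ℂ] a := by rw [sum_counit_smul_right r]

lemma antipode_mul_rev (a b : H) :
    HopfAlgebra.antipode (R := ℂ) (a * b)
      = HopfAlgebra.antipode (R := ℂ) b * HopfAlgebra.antipode (R := ℂ) a := by
  classical
  set r := ℛ ℂ a with hr
  set s := ℛ ℂ b with hs
  set r2 : ∀ i : H × H, Coalgebra.Repr ℂ (r.right i) (H × H) := fun i => ℛ ℂ (r.right i) with hr2
  set s2 : ∀ j : H × H, Coalgebra.Repr ℂ (s.right j) (H × H) := fun j => ℛ ℂ (s.right j) with hs2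
  have ha : HopfAlgebra.antipode (R := ℂ) a
      = ∑ i ∈ r.index, Coalgebra.counit (R := ℂ) (r.right i)
          • HopfAlgebra.antipode (R := ℂ) (r.left i) := by
    conv_lhs => rw [← sum_counit_smul_left r]
    rw [map_sum]
    simp only [map_smul]
  have hb : HopfAlgebra.antipode (R := ℂ) b
      = ∑ j ∈ s.index, Coalgebra.counit (R := ℂ) (s.right j)
          • HopfAlgebra.antipode (R := ℂ) (s.left j) := by
    conv_lhs => rw [← sum_counit_smul_left s]
    rw [map_sum]
    simp only [map_smul]
  symm
  calc HopfAlgebra.antipode (R := ℂ) b * HopfAlgebra.antipode (R := ℂ) a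
      = ∑ j ∈ s.index, ∑ i ∈ r.index,
          (HopfAlgebra.antipode (R := ℂ) (s.left j) * HopfAlgebra.antipode (R := ℂ) (r.left i))
            * ((Coalgebra.counit (R := ℂ) (r.right i) * Coalgebra.counit (R := ℂ) (s.right j))
                • (1 : H)) := by
        rw [ha, hb, Finset.sum_mul_sum]
        refine Finset.sum_congr rfl fun j _ => Finset.sum_congr rfl fun i _ => ?_
        rw [smul_mul_assoc, mul_smul_comm, mul_smul_comm, mul_one, smul_smul, mul_comm]
    _ = ∑ j ∈ s.index, ∑ i ∈ r.index, ∑ k ∈ (r2 i).index, ∑ l ∈ (s2 j).index,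
          (HopfAlgebra.antipode (R := ℂ) (s.left j) * HopfAlgebra.antipode (R := ℂ) (r.left i))
            * (((r2 i).left k * (s2 j).left l)
                * HopfAlgebra.antipode (R := ℂ) ((r2 i).right k * (s2 j).right l)) := by
        refine Finset.sum_congr rfl fun j _ => Finset.sum_congr rfl fun i _ => ?_
        have hsm := HopfAlgebra.sum_mul_antipode_eq_smul (R := ℂ) (mulRepr (r2 i) (s2 j))
        rw [Bialgebra.counit_mul] at hsm
        rw [← hsm]
        rw [mulRepr]
        simp only []
        rw [Finset.sum_product, Finset.mul_sum]
        refine Finset.sum_congr rfl fun k _ => ?_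
        rw [Finset.mul_sum]
    _ = ∑ j ∈ s.index, ∑ l ∈ (s2 j).index,
          (HopfAlgebra.antipode (R := ℂ) (s.left j) * (s2 j).left l)
            * HopfAlgebra.antipode (R := ℂ) (a * (s2 j).right l) := by
        refine Finset.sum_congr rfl fun j _ => ?_
        rw [show (∑ i ∈ r.index, ∑ k ∈ (r2 i).index, ∑ l ∈ (s2 j).index,
              (HopfAlgebra.antipode (R := ℂ) (s.left j) * HopfAlgebra.antipode (R := ℂ) (r.left i))
                * (((r2 i).left k * (s2 j).left l)
                    * HopfAlgebra.antipode (R := ℂ) ((r2 i).right k * (s2 j).right l)))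
            = ∑ l ∈ (s2 j).index, ∑ i ∈ r.index, ∑ k ∈ (r2 i).index,
              (HopfAlgebra.antipode (R := ℂ) (s.left j) * HopfAlgebra.antipode (R := ℂ) (r.left i))
                * (((r2 i).left k * (s2 j).left l)
                    * HopfAlgebra.antipode (R := ℂ) ((r2 i).right k * (s2 j).right l)) from ?_]
        · refine Finset.sum_congr rfl fun l _ => ?_
          set Φ : H ⊗[ℂ] H →ₗ[ℂ] H :=
            LinearMap.mul' ℂ H ∘ₗ TensorProduct.map
              (LinearMap.mulLeft ℂ (HopfAlgebra.antipode (R := ℂ) (s.left j))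
                ∘ₗ LinearMap.mulRight ℂ ((s2 j).left l))
              (HopfAlgebra.antipode (R := ℂ) ∘ₗ LinearMap.mulRight ℂ ((s2 j).right l)) with hΦ
          have hΦapp : ∀ x y : H, Φ (x ⊗ₜ[ℂ] y)
              = (HopfAlgebra.antipode (R := ℂ) (s.left j) * (x * (s2 j).left l))
                  * HopfAlgebra.antipode (R := ℂ) (y * (s2 j).right l) := by
            intro x y
            simp [hΦ, LinearMap.mul'_apply]
          have hW := congrArg Φ (sweedler_W r r2)
          simp only [map_sum, hΦapp] at hW
          calc ∑ i ∈ r.index, ∑ k ∈ (r2 i).index,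
                (HopfAlgebra.antipode (R := ℂ) (s.left j) * HopfAlgebra.antipode (R := ℂ) (r.left i))
                  * (((r2 i).left k * (s2 j).left l)
                      * HopfAlgebra.antipode (R := ℂ) ((r2 i).right k * (s2 j).right l))
              = ∑ i ∈ r.index, ∑ k ∈ (r2 i).index,
                (HopfAlgebra.antipode (R := ℂ) (s.left j)
                    * ((HopfAlgebra.antipode (R := ℂ) (r.left i) * (r2 i).left k) * (s2 j).left l))
                  * HopfAlgebra.antipode (R := ℂ) ((r2 i).right k * (s2 j).right l) := by
                refine Finset.sum_congr rfl fun i _ => Finset.sum_congr rfl fun k _ => ?_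
                simp only [mul_assoc]
            _ = (HopfAlgebra.antipode (R := ℂ) (s.left j) * ((1 : H) * (s2 j).left l))
                  * HopfAlgebra.antipode (R := ℂ) (a * (s2 j).right l) := hW
            _ = (HopfAlgebra.antipode (R := ℂ) (s.left j) * (s2 j).left l)
                  * HopfAlgebra.antipode (R := ℂ) (a * (s2 j).right l) := by rw [one_mul]
        · calc ∑ i ∈ r.index, ∑ k ∈ (r2 i).index, ∑ l ∈ (s2 j).index, _
              = ∑ i ∈ r.index, ∑ l ∈ (s2 j).index, ∑ k ∈ (r2 i).index, _ :=
                Finset.sum_congr rfl fun i _ => Finset.sum_comm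
            _ = ∑ l ∈ (s2 j).index, ∑ i ∈ r.index, ∑ k ∈ (r2 i).index, _ := Finset.sum_comm
    _ = HopfAlgebra.antipode (R := ℂ) (a * b) := by
        set X : H ⊗[ℂ] H →ₗ[ℂ] H :=
          LinearMap.mul' ℂ H ∘ₗ TensorProduct.map LinearMap.id
            (HopfAlgebra.antipode (R := ℂ) ∘ₗ LinearMap.mulLeft ℂ a) with hX
        have hXapp : ∀ x y : H, X (x ⊗ₜ[ℂ] y)
            = x * HopfAlgebra.antipode (R := ℂ) (a * y) := by
          intro x y
          simp [hX, LinearMap.mul'_apply]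
        have hW := congrArg X (sweedler_W s s2)
        simp only [map_sum, hXapp] at hW
        rw [hW, one_mul]

/-- If `^σℂ_δ` is a right-left stable anti-Yetter-Drinfeld
module over `H` (a Hopf algebra with invertible antipode, with `S⁻¹ = Sinv`),
then `^{S⁻¹(σ)}ℂ_δ` is a right-left stable anti-Yetter-Drinfeld module over
`H^cop`. -/
theorem sayd_cop_of_sayd
    (δ : H →ₐ[ℂ] ℂ) (σ : H) (hσ : IsGroupLike σ)
    (Sinv : H →ₗ[ℂ] H)
    (hSinv₁ : Sinv ∘ₗ HopfAlgebra.antipode (R := ℂ) = LinearMap.id)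
    (hSinv₂ : HopfAlgebra.antipode (R := ℂ) ∘ₗ Sinv = LinearMap.id)
    (hsayd : IsStableAntiYetterDrinfeld δ σ) :
    IsStableAntiYetterDrinfeldCop δ Sinv (Sinv σ) := by
  obtain ⟨hδσ, hayd⟩ := hsayd
  have Sinv_S : ∀ x : H, Sinv (HopfAlgebra.antipode (R := ℂ) x) = x := fun x =>
    LinearMap.congr_fun hSinv₁ x
  have S_Sinv : ∀ x : H, HopfAlgebra.antipode (R := ℂ) (Sinv x) = x := fun x =>
    LinearMap.congr_fun hSinv₂ x
  have S_one : HopfAlgebra.antipode (R := ℂ) (1 : H) = 1 := by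
    have h := HopfAlgebra.mul_antipode_rTensor_comul_apply (R := ℂ) (1 : H)
    rw [Bialgebra.comul_one] at h
    simpa [Algebra.TensorProduct.one_def, LinearMap.mul'_apply] using h
  have Sinv_one : Sinv (1 : H) = 1 := by
    have := Sinv_S (1 : H)
    rwa [S_one] at this
  have Sinv_mul : ∀ x y : H, Sinv (x * y) = Sinv y * Sinv x := by
    intro x y
    have h := antipode_mul_rev (Sinv y) (Sinv x)
    rw [S_Sinv, S_Sinv] at h
    have := congrArg Sinv h
    rw [Sinv_S] at this
    exact this.symm
  have hσS : σ * HopfAlgebra.antipode (R := ℂ) σ = 1 := by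
    have h := HopfAlgebra.mul_antipode_lTensor_comul_apply (R := ℂ) σ
    rw [hσ.2] at h
    simpa [LinearMap.mul'_apply, hσ.1] using h
  have hστ : σ * Sinv σ = 1 := by
    have h := congrArg Sinv hσS
    rw [Sinv_mul, Sinv_S, Sinv_one] at h
    exact h
  have hδτ : δ (Sinv σ) = 1 := by
    have h := congrArg δ hστ
    rw [map_mul, map_one, hδσ, one_mul] at h
    exact h
  have hmaps :
      (LinearMap.mul' ℂ H ∘ₗ TensorProduct.map (LinearMap.mulRight ℂ (Sinv σ) ∘ₗ Sinv)
          ((TensorProduct.lid ℂ H).toLinearMap ∘ₗ TensorProduct.map δ.toLinearMap LinearMap.id))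
        = Sinv ∘ₗ (LinearMap.mul' ℂ H
            ∘ₗ TensorProduct.map (LinearMap.mulRight ℂ σ) LinearMap.id
            ∘ₗ (TensorProduct.comm ℂ H H).toLinearMap
            ∘ₗ LinearMap.lTensor H ((TensorProduct.lid ℂ H).toLinearMap
                ∘ₗ TensorProduct.map δ.toLinearMap (HopfAlgebra.antipode (R := ℂ)))) := by
    ext a b c
    simp only [LinearMap.comp_apply, AlgebraTensorModule.curry_apply, TensorProduct.curry_apply,
      LinearMap.coe_restrictScalars, TensorProduct.map_tmul, LinearMap.lTensor_tmul,
      LinearEquiv.coe_coe, TensorProduct.lid_tmul, TensorProduct.comm_tmul,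
      LinearMap.mulRight_apply, LinearMap.id_coe, id_eq, LinearMap.mul'_apply,
      TensorProduct.tmul_smul, TensorProduct.smul_tmul', map_smul, smul_mul_assoc]
    rw [Sinv_mul, Sinv_mul, Sinv_S]
    simp [mul_assoc, mul_smul_comm, smul_mul_assoc]
  constructor
  · exact hδτ
  · intro h
    have h1 : aydMapCop δ Sinv (Sinv σ) h
        = (LinearMap.mul' ℂ H ∘ₗ TensorProduct.map (LinearMap.mulRight ℂ (Sinv σ) ∘ₗ Sinv)
            ((TensorProduct.lid ℂ H).toLinearMap ∘ₗ TensorProduct.map δ.toLinearMap LinearMap.id))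
            (comul₂ h) := by
      simp [aydMapCop, LinearMap.comp_apply]
    have h2 : aydMap δ σ h
        = (LinearMap.mul' ℂ H
            ∘ₗ TensorProduct.map (LinearMap.mulRight ℂ σ) LinearMap.id
            ∘ₗ (TensorProduct.comm ℂ H H).toLinearMap
            ∘ₗ LinearMap.lTensor H ((TensorProduct.lid ℂ H).toLinearMap
                ∘ₗ TensorProduct.map δ.toLinearMap (HopfAlgebra.antipode (R := ℂ))))
            (comul₂ h) := by
      simp [aydMap, LinearMap.comp_apply]
    simp only [LinearMap.comp_apply] at h2
    rw [h1, LinearMap.congr_fun hmaps (comul₂ h)]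
    simp only [LinearMap.comp_apply]
    rw [← h2, hayd h, map_smul]


end
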